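/- arXiv:1504.03263 — 2 statements merged into one kernel-verified Lean document; each statement's English description precedes it below -/
import Mathlib

section
/- If f₁,...,f_n are nonzero arithmetic functions and p₁,...,p_n are distinct primes such that the Jacobian det(∂_{p_j} f_i) (a determinant in the Dirichlet convolution ring) is the zero function, then the integer matrix (v_{p_j}(v(f_i)))_{i,j} has zero determinant, where v(f_i) is the order of f_i. -/
open ArithmeticFunction
open scoped Classical

/-- The embedding of `ℂ` into the Dirichlet ring of arithmetic functions,
sending `c` to the function with value `c` at `1` and `0` elsewhere. -/
noncomputable def CC : ℂ →+* ArithmeticFunction ℂ where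
  toFun c := ⟨fun n => if n = 1 then c else 0, by simp⟩
  map_zero' := by ext n; simp
  map_one' := by ext n; simp [ArithmeticFunction.one_apply]
  map_add' a b := by ext n; erw [ArithmeticFunction.add_apply]; by_cases h : n = 1 <;> simp [h]
  map_mul' a b := by
    ext n
    erw [ArithmeticFunction.mul_apply]
    by_cases h : n = 1
    · subst h
      rw [show Nat.divisorsAntidiagonal 1 = {(1,1)} from rfl]
      simp
    · rw [Finset.sum_eq_zero]
      · simp [h]
      · rintro ⟨d, e⟩ hde
        rw [Nat.mem_divisorsAntidiagonal] at hde
        rcases Decidable.eq_or_ne d 1 with hd | hd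
        · have : e ≠ 1 := by rintro rfl; exact h (by simp [← hde.1, hd])
          simp [this]
        · simp [hd]

/-- The order `v f` of an arithmetic function: the least element of the support
(`sInf` of the empty set is `0` for `f = 0`; that case is always excluded by hypotheses). -/
noncomputable def ordN (f : ArithmeticFunction ℂ) : ℕ := sInf {n : ℕ | f n ≠ 0}

/-- The order as an extended natural number, `⊤` for `f = 0`. -/
noncomputable def ordE (f : ArithmeticFunction ℂ) : ℕ∞ :=
  sInf ((fun n : ℕ => (n : ℕ∞)) '' {n : ℕ | f n ≠ 0})

/-- The norm `‖f‖ = 1/v(f)`, with `1/∞ = 0`. -/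
noncomputable def nrm (f : ArithmeticFunction ℂ) : ℝ :=
  if f = 0 then 0 else 1 / (ordN f : ℝ)

/-- Extension of an arithmetic function to `ℝ`, vanishing off `ℕ`. -/
noncomputable def extR (f : ArithmeticFunction ℂ) (x : ℝ) : ℂ :=
  if h : ∃ n : ℕ, (n : ℝ) = x then f h.choose else 0

/-- The exponential map `Exp f = exp(f 1) * ∑ (f - f 1)^k / k!` of the Dirichlet ring.
Since `(f - f 1)^k` has order `≥ 2^k`, the value of the infinite series at `n` equals the
value of the partial sum up to `k = n`. -/
noncomputable def ExpA (f : ArithmeticFunction ℂ) : ArithmeticFunction ℂ :=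
  ⟨fun n => Complex.exp (f 1) *
      ((∑ k ∈ Finset.range (n + 1),
        CC ((Nat.factorial k : ℂ)⁻¹) * (f - CC (f 1)) ^ k) n), by simp⟩

/-- The `p`-basic derivation `(∂_p f) n = v_p (n p) • f (n p)`. -/
noncomputable def DP (p : ℕ) (f : ArithmeticFunction ℂ) : ArithmeticFunction ℂ :=
  ⟨fun n => (padicValNat p (n * p) : ℂ) * f (n * p), by simp⟩

/-- The log-derivation `(∂_L f) n = log n * f n`. -/
noncomputable def DL (f : ArithmeticFunction ℂ) : ArithmeticFunction ℂ :=
  ⟨fun n => (Real.log n : ℂ) * f n, by simp⟩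

/-- The pointwise multiplication operator `𝔪_g`. -/
noncomputable def MG (g f : ArithmeticFunction ℂ) : ArithmeticFunction ℂ :=
  ⟨fun n => g n * f n, by simp⟩

/-- Integer powers `𝔪_g^i` of the pointwise multiplication operator:
`(𝔪_g^i f) n = (g n)^i * f n`. -/
noncomputable def MGi (g : ArithmeticFunction ℂ) (i : ℤ) (f : ArithmeticFunction ℂ) :
    ArithmeticFunction ℂ := ⟨fun n => g n ^ i * f n, by simp⟩

/-- `D` is a (ℂ-linear) derivation of the ring of arithmetic functions
under Dirichlet convolution. -/
def IsDerivationA (D : ArithmeticFunction ℂ → ArithmeticFunction ℂ) : Prop :=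
  (∀ f g, D (f + g) = D f + D g) ∧
  (∀ (c : ℂ) (f), D (CC c * f) = CC c * D f) ∧
  (∀ f g, D (f * g) = D f * g + f * D g)

/-- Convergence of a sequence of arithmetic functions in the norm topology. -/
def TendstoA (s : ℕ → ArithmeticFunction ℂ) (l : ArithmeticFunction ℂ) : Prop :=
  Filter.Tendsto (fun m => nrm (s m - l)) Filter.atTop (nhds 0)

/-- (Sequential) continuity of a map in the norm topology, which for this
ultrametric is equivalent to continuity. -/
def ContinuousA (D : ArithmeticFunction ℂ → ArithmeticFunction ℂ) : Prop :=
  ∀ (s : ℕ → ArithmeticFunction ℂ) (l), TendstoA s l → TendstoA (fun m => D (s m)) (D l)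

/-- The indicator function `e_m` of the singleton `{m}`. -/
noncomputable def En (m : ℕ) : ArithmeticFunction ℂ :=
  ⟨fun n => if 0 < n ∧ n = m then 1 else 0, by simp⟩

/-- The constant one arithmetic function `𝟙`. -/
noncomputable def OneA : ArithmeticFunction ℂ := ⟨fun n => if n = 0 then 0 else 1, by simp⟩

/-- The ℂ-algebra structure of the ring of arithmetic functions, via `CC`. -/
noncomputable instance : Algebra ℂ (ArithmeticFunction ℂ) := CC.toAlgebra


-- evaluation is additive
noncomputable def evalA (N : ℕ) : ArithmeticFunction ℂ →+ ℂ where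
  toFun f := f N
  map_zero' := rfl
  map_add' f g := ArithmeticFunction.add_apply

lemma prod_vanish (k : ℕ) (g : Fin k → ArithmeticFunction ℂ) (b w : Fin k → ℕ)
    (hb : ∀ i, 1 ≤ b i)
    (hg : ∀ i d, g i d ≠ 0 → b i ≤ d * w i) :
    ∀ N, N * ∏ i, w i < ∏ i, b i → (∏ i, g i) N = 0 := by
  induction k with
  | zero =>
      intro N hN
      simp only [Finset.univ_eq_empty, Finset.prod_empty] at hN ⊢
      have : N = 0 := by omega
      simp [this]
  | succ k ih =>
      intro N hN
      rw [Fin.prod_univ_succ]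
      rw [ArithmeticFunction.mul_apply]
      apply Finset.sum_eq_zero
      rintro ⟨d, e⟩ hde
      rw [Nat.mem_divisorsAntidiagonal] at hde
      by_cases hgd : g 0 d = 0
      · simp [hgd]
      · have hb0 : b 0 ≤ d * w 0 := hg 0 d hgd
        have he : (∏ i : Fin k, g i.succ) e = 0 := by
          apply ih (fun i => g i.succ) (fun i => b i.succ) (fun i => w i.succ)
            (fun i => hb i.succ) (fun i d hd => hg i.succ d hd)
          rw [Fin.prod_univ_succ (f := w), Fin.prod_univ_succ (f := b)] at hN
          have h1 : b 0 * (e * ∏ i : Fin k, w i.succ) ≤ N * (w 0 * ∏ i : Fin k, w i.succ) := by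
            calc b 0 * (e * ∏ i : Fin k, w i.succ)
                ≤ (d * w 0) * (e * ∏ i : Fin k, w i.succ) :=
                  Nat.mul_le_mul_right _ hb0
              _ = (d * e) * (w 0 * ∏ i : Fin k, w i.succ) := by ring
              _ = N * (w 0 * ∏ i : Fin k, w i.succ) := by rw [hde.1]
          have h2 : b 0 * (e * ∏ i : Fin k, w i.succ) < b 0 * ∏ i : Fin k, b i.succ := by
            calc b 0 * (e * ∏ i : Fin k, w i.succ) ≤ N * (w 0 * ∏ i : Fin k, w i.succ) := h1
              _ < b 0 * ∏ i : Fin k, b i.succ := hN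
          exact Nat.lt_of_mul_lt_mul_left h2
        simp [he]

lemma prod_eval (k : ℕ) (g : Fin k → ArithmeticFunction ℂ) (c : Fin k → ℕ)
    (hc : ∀ i, 1 ≤ c i) (hg : ∀ i d, g i d ≠ 0 → c i ≤ d) :
    (∏ i, g i) (∏ i, c i) = ∏ i, g i (c i) := by
  induction k with
  | zero => simp
  | succ k ih =>
      rw [Fin.prod_univ_succ, Fin.prod_univ_succ, Fin.prod_univ_succ (f := fun i => g i (c i))]
      set C := ∏ i : Fin k, c i.succ with hC
      have hC1 : 1 ≤ C := Finset.one_le_prod' fun i _ => hc i.succ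
      rw [ArithmeticFunction.mul_apply]
      rw [Finset.sum_eq_single (c 0, C)]
      · rw [ih (fun i => g i.succ) (fun i => c i.succ) (fun i => hc i.succ)
          (fun i d hd => hg i.succ d hd)]
      · rintro ⟨d, e⟩ hde hne
        rw [Nat.mem_divisorsAntidiagonal] at hde
        by_cases hgd : g 0 d = 0
        · simp [hgd]
        by_cases hge : (∏ i : Fin k, g i.succ) e = 0
        · simp [hge]
        exfalso
        have hd : c 0 ≤ d := hg 0 d hgd
        have heC : C ≤ e := by
          by_contra hl
          push_neg at hl
          apply hge
          apply prod_vanish k (fun i => g i.succ) (fun i => c i.succ) (fun _ => 1)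
            (fun i => hc i.succ) (fun i d hd => by simpa using hg i.succ d hd)
          simpa using hl
        have hde1 : d * e = c 0 * C := hde.1
        have h1 : d * C ≤ d * e := Nat.mul_le_mul_left _ heC
        have h2 : c 0 * C ≤ d * C := Nat.mul_le_mul_right _ hd
        have hdc : d * C = c 0 * C := le_antisymm (hde1 ▸ h1) h2
        have hd0 : d = c 0 := Nat.eq_of_mul_eq_mul_right (by omega) hdc
        have he0 : e = C := by
          subst hd0
          exact Nat.eq_of_mul_eq_mul_left (by have := hc 0; omega) hde1
        exact hne (by rw [hd0, he0])
      · intro h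
        exfalso
        apply h
        rw [Nat.mem_divisorsAntidiagonal]
        constructor
        · rfl
        · exact Nat.mul_ne_zero (by have := hc 0; omega) (by omega)

lemma prod_vanish' (k : ℕ) (g : Fin k → ArithmeticFunction ℂ) (b w : Fin k → ℕ)
    (hb : ∀ i, 1 ≤ b i)
    (hg : ∀ i d, g i d ≠ 0 → b i ≤ d * w i)
    (N : ℕ) (hN : N * ∏ i, w i = ∏ i, b i)
    (i0 : Fin k) (hnd : ¬ w i0 ∣ b i0) : (∏ i, g i) N = 0 := by
  set b' : Fin k → ℕ := fun i => if i = i0 then b i0 + 1 else b i with hb'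
  apply prod_vanish k g b' w
  · intro i
    by_cases h : i = i0 <;> simp [hb', h, hb i]
  · intro i d hd
    by_cases h : i = i0
    · subst h
      simp only [hb', if_pos rfl]
      have h1 : b i ≤ d * w i := hg i d hd
      have h2 : b i ≠ d * w i := fun hc => hnd ⟨d, by rw [hc]; ring⟩
      omega
    · simpa [hb', h] using hg i d hd
  · rw [hN]
    have hmem : i0 ∈ (Finset.univ : Finset (Fin k)) := Finset.mem_univ i0
    rw [← Finset.mul_prod_erase _ b hmem, ← Finset.mul_prod_erase _ b' hmem]
    have hR : ∏ x ∈ Finset.univ.erase i0, b' x = ∏ x ∈ Finset.univ.erase i0, b x := by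
      apply Finset.prod_congr rfl
      intro x hx
      simp [hb', (Finset.mem_erase.mp hx).1]
    rw [hR]
    have hbi : b' i0 = b i0 + 1 := by simp [hb']
    rw [hbi]
    have hRpos : 0 < ∏ x ∈ Finset.univ.erase i0, b x :=
      Finset.prod_pos fun x _ => hb x
    exact (Nat.mul_lt_mul_right hRpos).mpr (by omega)

lemma sign_mul_apply (z : ℤˣ) (F : ArithmeticFunction ℂ) (N : ℕ) :
    (((z : ℤ) : ArithmeticFunction ℂ) * F) N = ((z : ℤ) : ℂ) * F N := by
  rcases Int.units_eq_one_or z with h | h <;> rw [h]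
  · simp
  · simp only [Units.val_neg, Units.val_one, Int.cast_neg, Int.cast_one, neg_mul, one_mul]
    have h2 : (-1 : ArithmeticFunction ℂ) * F = -F := by ring
    rw [h2]
    rfl

lemma DP_apply (p : ℕ) (f : ArithmeticFunction ℂ) (d : ℕ) :
    DP p f d = (padicValNat p (d * p) : ℂ) * f (d * p) := rfl

/-- If `f 1, …, f n` are nonzero arithmetic functions and `p 1, …, p n` distinct primes
with vanishing Jacobian `det (∂_{p j} (f i)) = 0` (determinant in the Dirichlet ring),
then `det (v_{p j} (v (f i))) = 0` as an integer matrix. -/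
theorem stmt13 (n : ℕ) (f : Fin n → ArithmeticFunction ℂ) (hf : ∀ i, f i ≠ 0)
    (p : Fin n → ℕ) (hp : ∀ j, (p j).Prime) (hinj : Function.Injective p)
    (hdet : Matrix.det (Matrix.of fun i j => DP (p j) (f i)) = 0) :
    Matrix.det (Matrix.of fun i j => (padicValNat (p j) (ordN (f i)) : ℤ)) = 0 := by
  have hfm : ∀ i, f i (ordN (f i)) ≠ 0 := by
    intro i
    have hne : {k : ℕ | f i k ≠ 0}.Nonempty := by
      by_contra h
      rw [Set.not_nonempty_iff_eq_empty] at h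
      apply hf i
      ext k
      exact not_not.mp (Set.eq_empty_iff_forall_notMem.mp h k)
    exact Nat.sInf_mem hne
  set m : Fin n → ℕ := fun i => ordN (f i) with hmdef
  have hm1 : ∀ i, 1 ≤ m i := by
    intro i
    rcases Nat.eq_zero_or_pos (m i) with h | h
    · exfalso
      apply hfm i
      show f i (m i) = 0
      rw [h]
      exact ArithmeticFunction.map_zero
    · exact h
  have hle : ∀ i d, f i d ≠ 0 → m i ≤ d := fun i d hd => Nat.sInf_le hd
  by_cases hcol : ∃ j, ∀ i, ¬ p j ∣ m i
  · obtain ⟨j, hj⟩ := hcol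
    apply Matrix.det_eq_zero_of_column_eq_zero j
    intro i
    simp only [Matrix.of_apply]
    exact_mod_cast padicValNat.eq_zero_of_not_dvd (hj i)
  push_neg at hcol
  set P := ∏ j, p j with hP
  set M := ∏ i, m i with hM
  have hPdvd : P ∣ M := by
    have himg : P = ∏ q ∈ Finset.image p Finset.univ, q := by
      rw [Finset.prod_image (fun a _ b _ h => hinj h)]
    rw [himg]
    apply Finset.prod_primes_dvd
    · intro q hq
      obtain ⟨j, _, rfl⟩ := Finset.mem_image.mp hq
      exact (hp j).prime
    · intro q hq
      obtain ⟨j, _, rfl⟩ := Finset.mem_image.mp hq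
      obtain ⟨i, hi⟩ := hcol j
      exact hi.trans (Finset.dvd_prod_of_mem m (Finset.mem_univ i))
  set N := M / P with hNdef
  have hNP : N * P = M := Nat.div_mul_cancel hPdvd
  have hP1 : 1 ≤ P := Finset.one_le_prod' fun j _ => (hp j).one_lt.le
  -- key evaluation of each permutation term
  have key : ∀ τ : Equiv.Perm (Fin n),
      (∏ i, DP (p i) (f (τ i))) N
        = (∏ i, (padicValNat (p i) (m (τ i)) : ℂ)) * ∏ i, f i (m i) := by
    intro τ
    have hgle : ∀ i d, DP (p i) (f (τ i)) d ≠ 0 → m (τ i) ≤ d * p i := by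
      intro i d hd
      rw [DP_apply] at hd
      have hfd : f (τ i) (d * p i) ≠ 0 := fun h => hd (by rw [h, mul_zero])
      exact hle (τ i) (d * p i) hfd
    by_cases hgood : ∀ i, p i ∣ m (τ i)
    · set c : Fin n → ℕ := fun i => m (τ i) / p i with hc
      have hcp : ∀ i, c i * p i = m (τ i) := fun i => Nat.div_mul_cancel (hgood i)
      have hc1 : ∀ i, 1 ≤ c i := by
        intro i
        rcases Nat.eq_zero_or_pos (c i) with h | h
        · exfalso
          have h2 := hcp i
          rw [h, zero_mul] at h2
          have := hm1 (τ i)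
          omega
        · exact h
      have hprodc : ∏ i, c i = N := by
        have h1 : (∏ i, c i) * P = M := by
          rw [hP, ← Finset.prod_mul_distrib]
          calc ∏ i, c i * p i = ∏ i, m (τ i) :=
                Finset.prod_congr rfl fun i _ => hcp i
            _ = M := Equiv.prod_comp τ m
        exact Nat.eq_of_mul_eq_mul_right (by omega) (h1.trans hNP.symm)
      rw [← hprodc]
      rw [prod_eval n _ c hc1 (fun i d hd => by
        have h1 : m (τ i) / p i ≤ (d * p i) / p i := Nat.div_le_div_right (hgle i d hd)
        rwa [Nat.mul_div_cancel d (hp i).pos] at h1)]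
      have heach : ∀ i, DP (p i) (f (τ i)) (c i)
          = (padicValNat (p i) (m (τ i)) : ℂ) * f (τ i) (m (τ i)) := by
        intro i
        rw [DP_apply, hcp i]
      rw [Finset.prod_congr rfl fun i _ => heach i, Finset.prod_mul_distrib]
      congr 1
      exact Equiv.prod_comp τ (fun i => f i (m i))
    · push_neg at hgood
      obtain ⟨i0, hi0⟩ := hgood
      rw [prod_vanish' n _ (fun i => m (τ i)) p (fun i => hm1 (τ i)) hgle N
        (hNP.trans (Equiv.prod_comp τ m).symm) i0 hi0]
      have hz : (padicValNat (p i0) (m (τ i0)) : ℂ) = 0 := by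
        rw [padicValNat.eq_zero_of_not_dvd hi0]
        norm_num
      rw [Finset.prod_eq_zero (Finset.mem_univ i0) hz, zero_mul]
  -- evaluate the determinant hypothesis at N
  rw [Matrix.det_apply'] at hdet
  have h0 : ∑ τ : Equiv.Perm (Fin n),
      (evalA N) (((Equiv.Perm.sign τ : ℤ) : ArithmeticFunction ℂ)
        * ∏ i, (Matrix.of fun i j => DP (p j) (f i)) (τ i) i) = 0 := by
    rw [← map_sum, hdet, _root_.map_zero]
  have hterm : ∀ τ : Equiv.Perm (Fin n),
      (evalA N) (((Equiv.Perm.sign τ : ℤ) : ArithmeticFunction ℂ)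
        * ∏ i, (Matrix.of fun i j => DP (p j) (f i)) (τ i) i)
      = ((Equiv.Perm.sign τ : ℤ) : ℂ)
        * ((∏ i, (padicValNat (p i) (m (τ i)) : ℂ)) * ∏ i, f i (m i)) := by
    intro τ
    show ((((Equiv.Perm.sign τ : ℤ) : ArithmeticFunction ℂ))
        * ∏ i, (Matrix.of fun i j => DP (p j) (f i)) (τ i) i) N = _
    rw [sign_mul_apply]
    congr 1
    simp only [Matrix.of_apply]
    exact key τ
  rw [Finset.sum_congr rfl fun τ _ => hterm τ] at h0
  have hC : (∏ i, f i (m i)) ≠ 0 := Finset.prod_ne_zero_iff.mpr fun i _ => hfm i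
  have hdetC : Matrix.det (Matrix.of fun i j => ((padicValNat (p j) (m i) : ℂ))) = 0 := by
    rw [Matrix.det_apply']
    apply mul_right_cancel₀ hC
    rw [zero_mul, ← h0, Finset.sum_mul]
    apply Finset.sum_congr rfl
    intro τ _
    simp only [Matrix.of_apply]
    ring
  have hcast : ((Matrix.det (Matrix.of fun i j => (padicValNat (p j) (ordN (f i)) : ℤ)) : ℤ) : ℂ)
      = 0 := by
    rw [show ((Matrix.det (Matrix.of fun i j => (padicValNat (p j) (ordN (f i)) : ℤ)) : ℤ) : ℂ)
        = Matrix.det ((Matrix.of fun i j => (padicValNat (p j) (ordN (f i)) : ℤ)).map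
            (Int.castRingHom ℂ)) from RingHom.map_det (Int.castRingHom ℂ) _]
    rw [show ((Matrix.of fun i j => (padicValNat (p j) (ordN (f i)) : ℤ)).map
            (Int.castRingHom ℂ))
        = Matrix.of fun i j => ((padicValNat (p j) (m i) : ℂ)) from by
      ext i j
      simp [Matrix.map_apply, hmdef]]
    exact hdetC
  exact_mod_cast hcast
end

section
/- The kernel of the log-derivation ∂_L, extended to the field of fractions ℱ of the Dirichlet convolution ring of arithmetic functions, equals ℂ: if f, g are arithmetic functions with g ≠ 0 and ∂_L f * g = f * ∂_L g, then f = α * g for some α ∈ ℂ. -/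
open ArithmeticFunction
open scoped Classical

lemma DL_apply (f : ArithmeticFunction ℂ) (n : ℕ) : DL f n = (Real.log n : ℂ) * f n := rfl

lemma CC_apply (c : ℂ) (n : ℕ) : CC c n = if n = 1 then c else 0 := rfl

lemma CC_mul_apply (c : ℂ) (g : ArithmeticFunction ℂ) (n : ℕ) :
    (CC c * g) n = c * g n := by
  rcases Nat.eq_zero_or_pos n with rfl | hn
  · simp
  rw [mul_apply, Finset.sum_eq_single_of_mem (1, n)]
  · simp [CC_apply]
  · exact Nat.mem_divisorsAntidiagonal.mpr ⟨one_mul n, hn.ne'⟩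
  · rintro ⟨d, e⟩ hde hne
    rcases Decidable.eq_or_ne d 1 with rfl | hd
    · exfalso; apply hne
      obtain ⟨h1, _⟩ := Nat.mem_divisorsAntidiagonal.mp hde
      simp only [one_mul] at h1
      simp [h1]
    · simp [CC_apply, hd]

lemma subA_apply (f g : ArithmeticFunction ℂ) (n : ℕ) : (f - g) n = f n - g n := by
  rw [sub_eq_add_neg, ArithmeticFunction.add_apply, sub_eq_add_neg]; rfl

lemma exists_ne_of_ne_zero (f : ArithmeticFunction ℂ) (hf : f ≠ 0) : ∃ n, f n ≠ 0 := by
  by_contra hc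
  push_neg at hc
  exact hf (by ext n; simpa using hc n)

lemma key (f g : ArithmeticFunction ℂ) (hf : f ≠ 0) (hg : g ≠ 0)
    (h : DL f * g = f * DL g) :
    sInf {n | f n ≠ 0} = sInf {n | g n ≠ 0} := by
  obtain ⟨nf, hnf⟩ := exists_ne_of_ne_zero f hf
  obtain ⟨ng, hng⟩ := exists_ne_of_ne_zero g hg
  set a := sInf {n | f n ≠ 0} with ha_def
  set b := sInf {n | g n ≠ 0} with hb_def
  have ha : f a ≠ 0 := Nat.sInf_mem (⟨nf, hnf⟩ : {n | f n ≠ 0}.Nonempty)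
  have hb : g b ≠ 0 := Nat.sInf_mem (⟨ng, hng⟩ : {n | g n ≠ 0}.Nonempty)
  have ha0 : a ≠ 0 := fun h0 => ha (by rw [h0]; simp)
  have hb0 : b ≠ 0 := fun h0 => hb (by rw [h0]; simp)
  have hab : a * b ≠ 0 := Nat.mul_ne_zero ha0 hb0
  have hmem : (a, b) ∈ Nat.divisorsAntidiagonal (a * b) :=
    Nat.mem_divisorsAntidiagonal.mpr ⟨rfl, hab⟩
  have collapse : ∀ (F G : ArithmeticFunction ℂ),
      (∀ n, F n ≠ 0 → f n ≠ 0) → (∀ n, G n ≠ 0 → g n ≠ 0) →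
      (F * G) (a * b) = F a * G b := by
    intro F G hF hG
    rw [mul_apply]
    apply Finset.sum_eq_single_of_mem _ hmem
    rintro ⟨d, e⟩ hde hne
    obtain ⟨h1, _⟩ := Nat.mem_divisorsAntidiagonal.mp hde
    by_cases hFd : F d = 0
    · simp [hFd]
    by_cases hGe : G e = 0
    · simp [hGe]
    exfalso
    have had : a ≤ d := Nat.sInf_le (hF d hFd)
    have hbe : b ≤ e := Nat.sInf_le (hG e hGe)
    have ha' : 0 < a := Nat.pos_of_ne_zero ha0
    have he0 : 0 < e := Nat.pos_of_ne_zero (fun h0 => hGe (by rw [h0]; exact G.map_zero'))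
    have eq1 : a * e = a * b := le_antisymm (h1 ▸ Nat.mul_le_mul_right e had)
      (Nat.mul_le_mul_left a hbe)
    have heb : e = b := Nat.eq_of_mul_eq_mul_left ha' eq1
    have hda : d = a := Nat.eq_of_mul_eq_mul_right he0 (h1.trans eq1.symm)
    exact hne (Prod.ext hda heb)
  have hcong : (DL f * g) (a * b) = (f * DL g) (a * b) := by rw [h]
  rw [collapse (DL f) g (fun n hn h0 => hn (by simp [DL_apply, h0])) (fun _ hn => hn),
      collapse f (DL g) (fun _ hn => hn) (fun n hn h0 => hn (by simp [DL_apply, h0]))] at hcong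
  rw [DL_apply, DL_apply] at hcong
  have h' : ((Real.log a : ℂ) - (Real.log b : ℂ)) * (f a * g b) = 0 := by
    linear_combination hcong
  have hlog : (Real.log a : ℂ) = Real.log b := by
    rcases mul_eq_zero.mp h' with h2 | h2
    · exact sub_eq_zero.mp h2
    · exact absurd h2 (mul_ne_zero ha hb)
  have hlogr : Real.log a = Real.log b := by exact_mod_cast hlog
  have hcast : (a : ℝ) = (b : ℝ) :=
    Real.log_injOn_pos (Set.mem_Ioi.mpr (by exact_mod_cast Nat.pos_of_ne_zero ha0))
      (Set.mem_Ioi.mpr (by exact_mod_cast Nat.pos_of_ne_zero hb0)) hlogr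
  exact_mod_cast hcast

/-- The kernel of the log-derivation on the fraction field of the Dirichlet ring is `ℂ`:
if `g ≠ 0` and `∂_L f * g = f * ∂_L g`, then `f = α * g` for some `α ∈ ℂ`. -/
theorem stmt18 (f g : ArithmeticFunction ℂ) (hg : g ≠ 0)
    (h : DL f * g = f * DL g) :
    ∃ α : ℂ, f = CC α * g := by
  obtain ⟨ng, hng⟩ := exists_ne_of_ne_zero g hg
  have hb : g (sInf {n | g n ≠ 0}) ≠ 0 :=
    Nat.sInf_mem (⟨ng, hng⟩ : {n | g n ≠ 0}.Nonempty)
  set b := sInf {n | g n ≠ 0} with hb_def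
  refine ⟨f b / g b, ?_⟩
  have hDLsub : DL (f - CC (f b / g b) * g) = DL f - CC (f b / g b) * DL g := by
    ext n
    rw [DL_apply, subA_apply, subA_apply, CC_mul_apply, CC_mul_apply, DL_apply, DL_apply]
    ring
  have heq : DL (f - CC (f b / g b) * g) * g = (f - CC (f b / g b) * g) * DL g := by
    rw [hDLsub, sub_mul, sub_mul, h]
    ring
  by_cases hF0 : f - CC (f b / g b) * g = 0
  · rw [← sub_eq_zero]; exact hF0
  · exfalso
    have hkey := key (f - CC (f b / g b) * g) g hF0 hg heq
    have hne : {n | (f - CC (f b / g b) * g) n ≠ 0}.Nonempty :=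
      exists_ne_of_ne_zero _ hF0
    have hmem := Nat.sInf_mem hne
    rw [hkey] at hmem
    apply hmem
    rw [subA_apply, CC_mul_apply, div_mul_cancel₀ _ hb, sub_self]
end
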